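/- arXiv:1806.00550 — 2 statements merged into one kernel-verified Lean document; each statement's English description precedes it below -/
import Mathlib

section
/- Under the setup, Assumptions 2–5, Condition 1 with δ ≤ Δ_δ, and the symmetric case hypothesis, for every w ∈ W_δ and every point θ̂(w) ∈ Ω_θ satisfying G(θ̂(w), w) = 0, one has ‖θ̂_IJ(w) − θ̂(w)‖₂ ≤ 2·C_op²·C_IJ·δ². -/
/- Swiss Army Infinitesimal Jackknife: main error bound (Theorem 1).
   Vectors in ℝ^D are `Fin D → ℝ`; ‖·‖₂ is the Euclidean norm of the
   vectorization, ‖·‖₁ the entrywise 1-norm, and `opNorm` the operator norm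
   induced by the Euclidean vector norm. -/

open scoped BigOperators

noncomputable def vnorm2 {ι : Type*} [Fintype ι] (v : ι → ℝ) : ℝ :=
  Real.sqrt (∑ i, (v i) ^ 2)

noncomputable def vnorm1 {ι : Type*} [Fintype ι] (v : ι → ℝ) : ℝ :=
  ∑ i, |v i|

noncomputable def mnorm1 {D : ℕ} (M : Matrix (Fin D) (Fin D) ℝ) : ℝ :=
  ∑ i, ∑ j, |M i j|

noncomputable def opNorm {D : ℕ} (M : Matrix (Fin D) (Fin D) ℝ) : ℝ :=
  ‖Matrix.toEuclideanCLM (𝕜 := ℝ) M‖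

/-- `G(θ, w) = (1/N) ∑ₙ wₙ gₙ(θ)`. -/
noncomputable def Gfun {N D : ℕ} (g : Fin N → (Fin D → ℝ) → Fin D → ℝ)
    (θ : Fin D → ℝ) (w : Fin N → ℝ) : Fin D → ℝ :=
  (N : ℝ)⁻¹ • ∑ n, w n • g n θ

/-- `H(θ, w) = (1/N) ∑ₙ wₙ hₙ(θ)`. -/
noncomputable def Hfun {N D : ℕ} (hm : Fin N → (Fin D → ℝ) → Matrix (Fin D) (Fin D) ℝ)
    (θ : Fin D → ℝ) (w : Fin N → ℝ) : Matrix (Fin D) (Fin D) ℝ :=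
  (N : ℝ)⁻¹ • ∑ n, w n • hm n θ

/-- The infinitesimal jackknife `θ̂_IJ(w) = θ̂₁ − H₁⁻¹ G(θ̂₁, w − 1_w)`. -/
noncomputable def thetaIJ {N D : ℕ} (g : Fin N → (Fin D → ℝ) → Fin D → ℝ)
    (hm : Fin N → (Fin D → ℝ) → Matrix (Fin D) (Fin D) ℝ)
    (θ1 : Fin D → ℝ) (w : Fin N → ℝ) : Fin D → ℝ :=
  θ1 - (Hfun hm θ1 1)⁻¹.mulVec (Gfun g θ1 (w - 1))

open scoped Matrix
open Set

section Helpers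

lemma vnorm2_nonneg {ι : Type*} [Fintype ι] (v : ι → ℝ) : 0 ≤ vnorm2 v := Real.sqrt_nonneg _

lemma vnorm2_sq {ι : Type*} [Fintype ι] (v : ι → ℝ) : vnorm2 v ^ 2 = ∑ i, (v i)^2 := by
  rw [vnorm2, Real.sq_sqrt]; positivity

lemma dot_le_vnorm2 {ι : Type*} [Fintype ι] (f g : ι → ℝ) :
    ∑ i, f i * g i ≤ vnorm2 f * vnorm2 g := by
  have h := Finset.sum_mul_sq_le_sq_mul_sq Finset.univ f g
  calc ∑ i, f i * g i ≤ |∑ i, f i * g i| := le_abs_self _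
    _ = Real.sqrt ((∑ i, f i * g i)^2) := (Real.sqrt_sq_eq_abs _).symm
    _ ≤ Real.sqrt ((∑ i, f i ^2) * ∑ i, g i ^2) := Real.sqrt_le_sqrt h
    _ = vnorm2 f * vnorm2 g := by
        rw [vnorm2, vnorm2, ← Real.sqrt_mul (by positivity)]

lemma vnorm2_le_vnorm1 {ι : Type*} [Fintype ι] (v : ι → ℝ) : vnorm2 v ≤ vnorm1 v := by
  rw [vnorm2, vnorm1]
  have h : ∑ i, (v i)^2 ≤ (∑ i, |v i|)^2 := by
    have := Finset.sum_sq_le_sq_sum_of_nonneg (s := Finset.univ) (f := fun i => |v i|)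
      (fun i _ => abs_nonneg _)
    simpa [sq_abs] using this
  calc Real.sqrt (∑ i, (v i)^2) ≤ Real.sqrt ((∑ i, |v i|)^2) := Real.sqrt_le_sqrt h
    _ = ∑ i, |v i| := Real.sqrt_sq (by positivity)

lemma vnorm2_eq_norm {D : ℕ} (v : Fin D → ℝ) :
    vnorm2 v = ‖(WithLp.equiv 2 (Fin D → ℝ)).symm v‖ := by
  rw [EuclideanSpace.norm_eq, vnorm2]
  congr 1
  apply Finset.sum_congr rfl
  intro i _
  rw [Real.norm_eq_abs, sq_abs]
  rfl

lemma mulVec_opNorm {D : ℕ} (M : Matrix (Fin D) (Fin D) ℝ) (x : Fin D → ℝ) :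
    vnorm2 (M.mulVec x) ≤ opNorm M * vnorm2 x := by
  rw [vnorm2_eq_norm, vnorm2_eq_norm, opNorm]
  have : (WithLp.equiv 2 (Fin D → ℝ)).symm (M.mulVec x)
      = Matrix.toEuclideanCLM (𝕜 := ℝ) M ((WithLp.equiv 2 (Fin D → ℝ)).symm x) := by
    rw [WithLp.equiv_symm_apply, Matrix.toEuclideanCLM_toLp]
  rw [this]
  exact (Matrix.toEuclideanCLM (𝕜 := ℝ) M).le_opNorm _

lemma vnorm2_add_le {ι : Type*} [Fintype ι] (f g : ι → ℝ) :
    vnorm2 (fun i => f i + g i) ≤ vnorm2 f + vnorm2 g := by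
  have hsq : vnorm2 (fun i => f i + g i) ^ 2 ≤ (vnorm2 f + vnorm2 g)^2 := by
    rw [vnorm2_sq]
    have hexp : ∑ i, (f i + g i)^2
        = ((∑ i, (f i)^2) + ∑ i, 2*(f i * g i)) + ∑ i, (g i)^2 := by
      rw [← Finset.sum_add_distrib, ← Finset.sum_add_distrib]
      apply Finset.sum_congr rfl; intro i _; ring
    have h2s : ∑ i, 2*(f i * g i) = 2 * ∑ i, f i * g i := by rw [Finset.mul_sum]
    have e1 : ∑ i, (f i)^2 = vnorm2 f ^ 2 := (vnorm2_sq f).symm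
    have e2 : ∑ i, (g i)^2 = vnorm2 g ^ 2 := (vnorm2_sq g).symm
    rw [hexp, h2s, e1, e2]
    nlinarith [dot_le_vnorm2 f g]
  have h1 := vnorm2_nonneg (fun i => f i + g i)
  have h2 : (0:ℝ) ≤ vnorm2 f + vnorm2 g := add_nonneg (vnorm2_nonneg f) (vnorm2_nonneg g)
  nlinarith

lemma vnorm2_smul {ι : Type*} [Fintype ι] (c : ℝ) (v : ι → ℝ) :
    vnorm2 (c • v) = |c| * vnorm2 v := by
  rw [vnorm2, vnorm2]
  have : ∑ i, ((c • v) i)^2 = c^2 * ∑ i, (v i)^2 := by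
    simp [mul_pow, Finset.mul_sum, mul_comm]
  rw [this, Real.sqrt_mul (sq_nonneg c), Real.sqrt_sq_eq_abs]

lemma mulVec_frob {D : ℕ} (M : Matrix (Fin D) (Fin D) ℝ) (x : Fin D → ℝ) :
    vnorm2 (M.mulVec x) ≤ vnorm2 (fun p : Fin D × Fin D => M p.1 p.2) * vnorm2 x := by
  have key : ∑ i, (M.mulVec x i)^2
      ≤ (∑ p : Fin D × Fin D, (M p.1 p.2)^2) * ∑ j, (x j)^2 := by
    rw [Fintype.sum_prod_type, Finset.sum_mul]
    refine Finset.sum_le_sum fun i _ => ?_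
    simpa [Matrix.mulVec, dotProduct] using
      Finset.sum_mul_sq_le_sq_mul_sq Finset.univ (M i) x
  calc vnorm2 (M.mulVec x) = Real.sqrt (∑ i, (M.mulVec x i)^2) := rfl
    _ ≤ Real.sqrt ((∑ p : Fin D × Fin D, (M p.1 p.2)^2) * ∑ j, (x j)^2) :=
        Real.sqrt_le_sqrt key
    _ = _ := by rw [Real.sqrt_mul (by positivity)]; rfl

lemma frob_le_mnorm1 {D : ℕ} (M : Matrix (Fin D) (Fin D) ℝ) :
    vnorm2 (fun p : Fin D × Fin D => M p.1 p.2) ≤ mnorm1 M := by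
  have : mnorm1 M = vnorm1 (fun p : Fin D × Fin D => M p.1 p.2) := by
    rw [mnorm1, vnorm1, Fintype.sum_prod_type]
  rw [this]
  exact vnorm2_le_vnorm1 _

lemma quad_lower {D : ℕ} (M : Matrix (Fin D) (Fin D) ℝ) (hpd : M.PosDef) {Cop : ℝ}
    (hop : opNorm M⁻¹ ≤ Cop) (x : Fin D → ℝ) :
    ∑ i, (x i)^2 ≤ Cop * (x ⬝ᵥ M.mulVec x) := by
  by_cases hx : x = 0
  · simp [hx]
  have hdet : IsUnit M.det := isUnit_iff_ne_zero.mpr hpd.det_pos.ne'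
  have hMinv : M * M⁻¹ = 1 := Matrix.mul_nonsing_inv M hdet
  set y := M⁻¹.mulVec x with hy
  have hMy : M.mulVec y = x := by
    rw [hy, Matrix.mulVec_mulVec, hMinv, Matrix.one_mulVec]
  have hsymmM : Mᵀ = M := by
    have := hpd.1
    rwa [Matrix.IsHermitian, Matrix.conjTranspose_eq_transpose_of_trivial] at this
  set S := ∑ i, (x i)^2 with hS
  have hSx : x ⬝ᵥ x = S := by simp [dotProduct, hS, sq]
  set Q := x ⬝ᵥ M.mulVec x with hQ
  set r := x ⬝ᵥ y with hr
  have hQ0 : 0 ≤ Q := by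
    have := hpd.posSemidef.re_dotProduct_nonneg x
    simpa using this
  have hr0 : 0 < r := by
    have := hpd.inv.re_dotProduct_pos hx
    simpa [hr, hy] using this
  have hrle : r ≤ Cop * S := by
    have h1 : r ≤ vnorm2 x * vnorm2 y := dot_le_vnorm2 x y
    have h2 : vnorm2 y ≤ Cop * vnorm2 x :=
      (mulVec_opNorm M⁻¹ x).trans (mul_le_mul_of_nonneg_right hop (vnorm2_nonneg x))
    have h3 : vnorm2 x * vnorm2 y ≤ vnorm2 x * (Cop * vnorm2 x) :=
      mul_le_mul_of_nonneg_left h2 (vnorm2_nonneg x)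
    have hS2 : S = vnorm2 x ^ 2 := by rw [hS, ← vnorm2_sq]
    have h4 : vnorm2 x * (Cop * vnorm2 x) = Cop * S := by rw [hS2]; ring
    linarith
  have hyMx : y ⬝ᵥ M.mulVec x = S := by
    rw [Matrix.dotProduct_mulVec, ← Matrix.mulVec_transpose, hsymmM, hMy, hSx]
  have hyMy : y ⬝ᵥ M.mulVec y = r := by
    rw [hMy]; rw [hr, dotProduct_comm]
  have hexp : ∀ l : ℝ, 0 ≤ Q - 2*l*S + l^2*r := by
    intro l
    have h0 := hpd.posSemidef.re_dotProduct_nonneg (x - l • y)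
    simp only [RCLike.star_def, starRingEnd_apply, star_trivial, RCLike.re_to_real] at h0
    have hexp2 : (x - l • y) ⬝ᵥ M.mulVec (x - l • y) = Q - 2*l*S + l^2*r := by
      rw [Matrix.mulVec_sub, Matrix.mulVec_smul, sub_dotProduct,
        dotProduct_sub, dotProduct_sub, smul_dotProduct,
        dotProduct_smul, dotProduct_smul, smul_dotProduct,
        hMy, hSx, hyMx]
      rw [dotProduct_comm y x, ← hr, ← hQ]
      simp only [smul_eq_mul]
      ring
    rw [hexp2] at h0
    exact h0
  have hdisc : S^2 ≤ Q * r := by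
    have := hexp (S/r)
    have e : Q - 2*(S/r)*S + (S/r)^2*r = Q - S^2/r := by field_simp; ring
    rw [e] at this
    have h3 : S^2/r ≤ Q := by linarith
    have := (div_le_iff₀ hr0).mp h3
    linarith
  have hSpos : 0 < S := by
    rcases Function.ne_iff.mp hx with ⟨i, hi⟩
    have : 0 < (x i)^2 := pow_two_pos_of_ne_zero hi
    have hle : (x i)^2 ≤ S := by
      rw [hS]
      exact Finset.single_le_sum (fun j _ => sq_nonneg (x j)) (Finset.mem_univ i)
    linarith
  nlinarith [mul_le_mul_of_nonneg_left hrle hQ0]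

lemma Hfun_mulVec {N D : ℕ} (hm : Fin N → (Fin D → ℝ) → Matrix (Fin D) (Fin D) ℝ)
    (θ : Fin D → ℝ) (u : Fin N → ℝ) (x : Fin D → ℝ) :
    (Hfun hm θ u).mulVec x = (N : ℝ)⁻¹ • ∑ n, u n • (hm n θ).mulVec x := by
  unfold Hfun
  rw [Matrix.smul_mulVec]
  congr 1
  induction (Finset.univ : Finset (Fin N)) using Finset.induction with
  | empty => simp [Matrix.zero_mulVec]
  | insert _ _ h ih =>
      rw [Finset.sum_insert h, Finset.sum_insert h, Matrix.add_mulVec, ih,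
        Matrix.smul_mulVec]

lemma Hfun_entry_contOn {N D : ℕ} {Ωθ : Set (Fin D → ℝ)}
    {hm : Fin N → (Fin D → ℝ) → Matrix (Fin D) (Fin D) ℝ}
    (hcont : ∀ n, ∀ i j : Fin D, ContinuousOn (fun θ => hm n θ i j) Ωθ)
    (u : Fin N → ℝ) (i j : Fin D) :
    ContinuousOn (fun θ => Hfun hm θ u i j) Ωθ := by
  unfold Hfun
  simp only [Matrix.smul_apply, Matrix.sum_apply, smul_eq_mul]
  exact (continuousOn_finset_sum Finset.univ fun n _ =>
    (continuousOn_const.mul (hcont n i j))).const_smul ((N : ℝ)⁻¹)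

lemma gamma_mem {D : ℕ} {Ωθ : Set (Fin D → ℝ)} (hΩconv : Convex ℝ Ωθ)
    {θ1 θw : Fin D → ℝ} (hθ1 : θ1 ∈ Ωθ) (hθw : θw ∈ Ωθ) {t : ℝ} (ht : t ∈ Icc (0:ℝ) 1) :
    θ1 + t • (θw - θ1) ∈ Ωθ := by
  have : θ1 + t • (θw - θ1) = (1 - t) • θ1 + t • θw := by module
  rw [this]
  exact hΩconv hθ1 hθw (by linarith [ht.1, ht.2]) ht.1 (by ring)

lemma phi_contOn {N D : ℕ} {Ωθ : Set (Fin D → ℝ)} (hΩconv : Convex ℝ Ωθ)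
    {hm : Fin N → (Fin D → ℝ) → Matrix (Fin D) (Fin D) ℝ}
    (hcont : ∀ n, ∀ i j : Fin D, ContinuousOn (fun θ => hm n θ i j) Ωθ)
    {θ1 θw : Fin D → ℝ} (hθ1 : θ1 ∈ Ωθ) (hθw : θw ∈ Ωθ) (u : Fin N → ℝ) (i : Fin D) :
    ContinuousOn
      (fun t : ℝ => ((Hfun hm (θ1 + t • (θw - θ1)) u).mulVec (θw - θ1)) i)
      (Icc (0:ℝ) 1) := by
  have hmaps : MapsTo (fun t : ℝ => θ1 + t • (θw - θ1)) (Icc (0:ℝ) 1) Ωθ :=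
    fun t ht => gamma_mem hΩconv hθ1 hθw ht
  have hγc : Continuous (fun t : ℝ => θ1 + t • (θw - θ1)) := by
    apply continuous_const.add
    exact continuous_id.smul continuous_const
  have : (fun t : ℝ => ((Hfun hm (θ1 + t • (θw - θ1)) u).mulVec (θw - θ1)) i)
      = fun t => ∑ j, Hfun hm (θ1 + t • (θw - θ1)) u i j * (θw - θ1) j := by
    funext t; rfl
  rw [this]
  exact continuousOn_finset_sum Finset.univ fun j _ =>
    (((Hfun_entry_contOn hcont u i j).comp hγc.continuousOn hmaps).mul continuousOn_const)

lemma ftc_key {N D : ℕ} {Ωθ : Set (Fin D → ℝ)} (hΩconv : Convex ℝ Ωθ)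
    {g : Fin N → (Fin D → ℝ) → Fin D → ℝ}
    {hm : Fin N → (Fin D → ℝ) → Matrix (Fin D) (Fin D) ℝ}
    (hderiv : ∀ n, ∀ θ ∈ Ωθ,
      HasFDerivWithinAt (g n) ((hm n θ).mulVecLin.toContinuousLinearMap) Ωθ θ)
    (hcont : ∀ n, ∀ i j : Fin D, ContinuousOn (fun θ => hm n θ i j) Ωθ)
    {θ1 θw : Fin D → ℝ} (hθ1 : θ1 ∈ Ωθ) (hθw : θw ∈ Ωθ) (u : Fin N → ℝ) (i : Fin D) :
    ∫ t in (0:ℝ)..1, ((Hfun hm (θ1 + t • (θw - θ1)) u).mulVec (θw - θ1)) i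
      = Gfun g θw u i - Gfun g θ1 u i := by
  set d := θw - θ1 with hd
  set γ : ℝ → (Fin D → ℝ) := fun t => θ1 + t • d with hγ
  have hmaps : MapsTo γ (Icc (0:ℝ) 1) Ωθ := fun t ht => gamma_mem hΩconv hθ1 hθw ht
  have hγd : ∀ t : ℝ, HasDerivAt γ d t := by
    intro t
    have h1 : HasDerivAt (fun y : ℝ => y • d) ((1:ℝ) • d) t := (hasDerivAt_id t).smul_const d
    rw [one_smul] at h1
    exact h1.const_add θ1
  have hGd : ∀ θ ∈ Ωθ, HasFDerivWithinAt (fun θ => Gfun g θ u)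
      ((N : ℝ)⁻¹ • ∑ n, u n • (hm n θ).mulVecLin.toContinuousLinearMap) Ωθ θ := by
    intro θ hθ
    exact (HasFDerivWithinAt.fun_sum fun n _ =>
      (hderiv n θ hθ).const_smul (u n)).fun_const_smul ((N : ℝ)⁻¹)
  have happ : ∀ θ, ((N : ℝ)⁻¹ • ∑ n, u n • (hm n θ).mulVecLin.toContinuousLinearMap) d
      = (Hfun hm θ u).mulVec d := by
    intro θ
    rw [Hfun_mulVec]
    simp [ContinuousLinearMap.sum_apply]
  have hcomp : ∀ t ∈ Icc (0:ℝ) 1,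
      HasDerivWithinAt (fun t => Gfun g (γ t) u) ((Hfun hm (γ t) u).mulVec d)
        (Icc (0:ℝ) 1) t := by
    intro t ht
    have := (hGd (γ t) (hmaps ht)).comp_hasDerivWithinAt t ((hγd t).hasDerivWithinAt) hmaps
    rwa [happ] at this
  have hcompi : ∀ t ∈ Icc (0:ℝ) 1,
      HasDerivWithinAt (fun t => Gfun g (γ t) u i) (((Hfun hm (γ t) u).mulVec d) i)
        (Icc (0:ℝ) 1) t := by
    intro t ht
    exact (ContinuousLinearMap.proj (R := ℝ) (φ := fun _ : Fin D => ℝ)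
      i).hasFDerivAt.comp_hasDerivWithinAt t (hcomp t ht)
  have hΦc : ContinuousOn (fun t => ((Hfun hm (γ t) u).mulVec d) i) (Icc (0:ℝ) 1) :=
    phi_contOn hΩconv hcont hθ1 hθw u i
  have := intervalIntegral.integral_eq_sub_of_hasDeriv_right_of_le (zero_le_one)
    (fun t ht => (hcompi t ht).continuousWithinAt)
    (fun t ht => ((hcompi t (Ioo_subset_Icc_self ht)).hasDerivAt
      (Icc_mem_nhds ht.1 ht.2)).hasDerivWithinAt)
    (hΦc.intervalIntegrable_of_Icc zero_le_one)
  have e0 : γ 0 = θ1 := by simp [hγ]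
  have e1 : γ 1 = θw := by simp only [hγ]; module
  rw [e0, e1] at this
  simpa only [hγ] using this

lemma frob_smooth {N D : ℕ} (hN : 0 < N)
    (hm : Fin N → (Fin D → ℝ) → Matrix (Fin D) (Fin D) ℝ)
    (θ θ' : Fin D → ℝ) (u : Fin N → ℝ) {Cw L : ℝ}
    (hw : vnorm2 u / Real.sqrt N ≤ Cw)
    (hh : vnorm2 (fun p : Fin N × Fin D × Fin D =>
        hm p.1 θ p.2.1 p.2.2 - hm p.1 θ' p.2.1 p.2.2) / Real.sqrt N ≤ L) :
    vnorm2 (fun p : Fin D × Fin D => Hfun hm θ u p.1 p.2 - Hfun hm θ' u p.1 p.2)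
      ≤ Cw * L := by
  have hsN : (0:ℝ) < Real.sqrt N := Real.sqrt_pos.mpr (by exact_mod_cast hN)
  set Δ : Fin N → Fin D × Fin D → ℝ := fun n p => hm n θ p.1 p.2 - hm n θ' p.1 p.2 with hΔ
  have hentry : ∀ p : Fin D × Fin D,
      Hfun hm θ u p.1 p.2 - Hfun hm θ' u p.1 p.2 = (N:ℝ)⁻¹ * ∑ n, u n * Δ n p := by
    intro p
    simp only [Hfun, Matrix.smul_apply, Matrix.sum_apply, smul_eq_mul, hΔ]
    rw [← mul_sub, ← Finset.sum_sub_distrib]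
    congr 1
    apply Finset.sum_congr rfl
    intro n _
    ring
  have hq : ∑ q : Fin N × Fin D × Fin D, (Δ q.1 q.2)^2
      = ∑ p : Fin D × Fin D, ∑ n, (Δ n p)^2 := by
    rw [Fintype.sum_prod_type]
    exact Finset.sum_comm
  have hp : ∀ p : Fin D × Fin D, ((N:ℝ)⁻¹ * ∑ n, u n * Δ n p)^2
      ≤ ((N:ℝ)⁻¹)^2 * ((∑ n, (u n)^2) * ∑ n, (Δ n p)^2) := by
    intro p
    rw [mul_pow]
    exact mul_le_mul_of_nonneg_left
      (Finset.sum_mul_sq_le_sq_mul_sq Finset.univ u (fun n => Δ n p)) (by positivity)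
  have key : ∑ p : Fin D × Fin D, ((N:ℝ)⁻¹ * ∑ n, u n * Δ n p)^2
      ≤ ((N:ℝ)⁻¹)^2 * ((∑ n, (u n)^2) *
          ∑ q : Fin N × Fin D × Fin D, (Δ q.1 q.2)^2) := by
    calc ∑ p : Fin D × Fin D, ((N:ℝ)⁻¹ * ∑ n, u n * Δ n p)^2
        ≤ ∑ p : Fin D × Fin D, ((N:ℝ)⁻¹)^2 * ((∑ n, (u n)^2) * ∑ n, (Δ n p)^2) :=
          Finset.sum_le_sum fun p _ => hp p
      _ = _ := by rw [hq]; simp only [Finset.mul_sum]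
  have hflat : (fun p : Fin D × Fin D => Hfun hm θ u p.1 p.2 - Hfun hm θ' u p.1 p.2)
      = fun p => (N:ℝ)⁻¹ * ∑ n, u n * Δ n p := funext hentry
  rw [hflat, vnorm2]
  have hb := Real.sqrt_le_sqrt key
  have heq : Real.sqrt (((N:ℝ)⁻¹)^2 * ((∑ n, (u n)^2) *
        ∑ q : Fin N × Fin D × Fin D, (Δ q.1 q.2)^2))
      = (vnorm2 u / Real.sqrt N) *
        (vnorm2 (fun q : Fin N × Fin D × Fin D => Δ q.1 q.2) / Real.sqrt N) := by
    rw [Real.sqrt_mul (by positivity), Real.sqrt_mul (by positivity),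
      Real.sqrt_sq (by positivity)]
    rw [vnorm2, vnorm2]
    have hNi : ((N:ℝ))⁻¹ = (Real.sqrt N)⁻¹ * (Real.sqrt N)⁻¹ := by
      rw [← mul_inv, Real.mul_self_sqrt (by positivity)]
    rw [hNi]
    ring
  rw [heq] at hb
  have hh' : vnorm2 (fun q : Fin N × Fin D × Fin D => Δ q.1 q.2) / Real.sqrt N ≤ L := hh
  have ha0 : 0 ≤ vnorm2 u / Real.sqrt N := div_nonneg (vnorm2_nonneg u) hsN.le
  have hb0 : 0 ≤ vnorm2 (fun q : Fin N × Fin D × Fin D => Δ q.1 q.2) / Real.sqrt N :=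
    div_nonneg (vnorm2_nonneg _) hsN.le
  exact hb.trans (mul_le_mul hw hh' hb0 (ha0.trans hw))

end Helpers

lemma vnorm2_pos {ι : Type*} [Fintype ι] {v : ι → ℝ} (hv : v ≠ 0) : 0 < vnorm2 v := by
  rcases Function.ne_iff.mp hv with ⟨i, hi⟩
  have h1 : 0 < (v i)^2 := pow_two_pos_of_ne_zero hi
  have h2 : (v i)^2 ≤ ∑ j, (v j)^2 :=
    Finset.single_le_sum (fun j _ => sq_nonneg (v j)) (Finset.mem_univ i)
  rw [vnorm2]
  exact Real.sqrt_pos.mpr (by linarith)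

lemma Gfun_sub_w {N D : ℕ} (g : Fin N → (Fin D → ℝ) → Fin D → ℝ) (θ : Fin D → ℝ)
    (w : Fin N → ℝ) : Gfun g θ (w - 1) = Gfun g θ w - Gfun g θ 1 := by
  unfold Gfun
  rw [← smul_sub, ← Finset.sum_sub_distrib]
  congr 1
  apply Finset.sum_congr rfl
  intro n _
  rw [Pi.sub_apply, sub_smul]

set_option maxHeartbeats 1000000 in
theorem swiss_army_ij_error_bound
    (N D : ℕ) (hN : 0 < N) (hD : 0 < D)
    -- setup: compact convex parameter domain
    (Ωθ : Set (Fin D → ℝ)) (hΩc : IsCompact Ωθ) (hΩconv : Convex ℝ Ωθ)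
    -- setup: the gₙ are continuously differentiable on Ωθ with Jacobians hₙ
    (g : Fin N → (Fin D → ℝ) → Fin D → ℝ)
    (hm : Fin N → (Fin D → ℝ) → Matrix (Fin D) (Fin D) ℝ)
    (hderiv : ∀ n, ∀ θ ∈ Ωθ,
      HasFDerivWithinAt (g n) ((hm n θ).mulVecLin.toContinuousLinearMap) Ωθ θ)
    (hcont : ∀ n, ∀ i j : Fin D, ContinuousOn (fun θ => hm n θ i j) Ωθ)
    -- setup: θ̂₁ solves the estimating equation at weights 1_w
    (θ1 : Fin D → ℝ) (hθ1 : θ1 ∈ Ωθ) (hroot : Gfun g θ1 1 = 0)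
    -- Assumption 2 (non-degeneracy)
    (Cop : ℝ)
    (hA2 : ∀ θ ∈ Ωθ, IsUnit (Hfun hm θ 1) ∧ opNorm (Hfun hm θ 1)⁻¹ ≤ Cop)
    -- Assumption 3 (bounded averages)
    (Cg Ch : ℝ)
    (hA3g : ∀ θ ∈ Ωθ,
      vnorm2 (fun p : Fin N × Fin D => g p.1 θ p.2) / Real.sqrt N ≤ Cg)
    (hA3h : ∀ θ ∈ Ωθ,
      vnorm2 (fun p : Fin N × Fin D × Fin D => hm p.1 θ p.2.1 p.2.2) / Real.sqrt N ≤ Ch)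
    -- Assumption 4 (local smoothness)
    (Δθ Lh : ℝ) (hΔθ : 0 < Δθ)
    (hA4 : ∀ θ ∈ Ωθ, vnorm2 (θ - θ1) ≤ Δθ →
      vnorm2 (fun p : Fin N × Fin D × Fin D =>
          hm p.1 θ p.2.1 p.2.2 - hm p.1 θ1 p.2.1 p.2.2) / Real.sqrt N
        ≤ Lh * vnorm2 (θ - θ1))
    -- Assumption 5 (bounded weights)
    (W : Set (Fin N → ℝ)) (Cw : ℝ)
    (hA5 : ∀ w ∈ W, vnorm2 w / Real.sqrt N ≤ Cw)
    -- Condition 1 (set complexity)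
    (δ : ℝ) (hδ : 0 ≤ δ) (Wδ : Set (Fin N → ℝ)) (hWδ : Wδ ⊆ W)
    (hC1g : ∀ w ∈ Wδ, ∀ θ ∈ Ωθ, vnorm1 (Gfun g θ w - Gfun g θ 1) ≤ δ)
    (hC1h : ∀ w ∈ Wδ, ∀ θ ∈ Ωθ, mnorm1 (Hfun hm θ w - Hfun hm θ 1) ≤ δ)
    -- symmetric case hypothesis
    (hsymm : ∀ n, ∀ θ ∈ Ωθ, (hm n θ).IsSymm)
    (hpos : ∀ θ ∈ Ωθ, (Hfun hm θ 1).PosDef)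
    -- δ ≤ Δ_δ := min{Δθ/C_op, 1/(2 C_IJ C_op)} where C_IJ := 1 + D·C_w·L_h·C_op
    (hδΔ : δ ≤ min (Δθ / Cop) (1 / (2 * (1 + D * Cw * Lh * Cop) * Cop))) :
    ∀ w ∈ Wδ, ∀ θw ∈ Ωθ, Gfun g θw w = 0 →
      vnorm2 (thetaIJ g hm θ1 w - θw)
        ≤ 2 * Cop ^ 2 * (1 + D * Cw * Lh * Cop) * δ ^ 2 := by
  intro w hw θw hθw hrootw
  have hsN : (0:ℝ) < Real.sqrt N := Real.sqrt_pos.mpr (by exact_mod_cast hN)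
  have hH1pd : (Hfun hm θ1 1).PosDef := hpos θ1 hθ1
  have hdet1 : IsUnit (Hfun hm θ1 1).det := isUnit_iff_ne_zero.mpr hH1pd.det_pos.ne'
  have hCop2 := (hA2 θ1 hθ1).2
  have hCop : 0 < Cop := by
    set x : Fin D → ℝ := Pi.single ⟨0, hD⟩ 1 with hx
    have hxn : vnorm2 x = 1 := by
      rw [vnorm2]
      have : ∑ i, (x i)^2 = 1 := by
        rw [hx]
        rw [Finset.sum_eq_single ⟨0, hD⟩]
        · simp
        · intro b _ hb; simp [Pi.single_apply, hb]
        · intro h; exact absurd (Finset.mem_univ _) h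
      rw [this, Real.sqrt_one]
    have hinvmul : (Hfun hm θ1 1)⁻¹.mulVec ((Hfun hm θ1 1).mulVec x) = x := by
      rw [Matrix.mulVec_mulVec, Matrix.nonsing_inv_mul _ hdet1, Matrix.one_mulVec]
    have h1 : (1:ℝ) ≤ Cop * vnorm2 ((Hfun hm θ1 1).mulVec x) := by
      calc (1:ℝ) = vnorm2 x := hxn.symm
        _ = vnorm2 ((Hfun hm θ1 1)⁻¹.mulVec ((Hfun hm θ1 1).mulVec x)) := by rw [hinvmul]
        _ ≤ opNorm (Hfun hm θ1 1)⁻¹ * vnorm2 ((Hfun hm θ1 1).mulVec x) := mulVec_opNorm _ _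
        _ ≤ Cop * vnorm2 ((Hfun hm θ1 1).mulVec x) :=
            mul_le_mul_of_nonneg_right hCop2 (vnorm2_nonneg _)
    nlinarith [vnorm2_nonneg ((Hfun hm θ1 1).mulVec x)]
  have hCw : 0 ≤ Cw := le_trans (div_nonneg (vnorm2_nonneg w) hsN.le) (hA5 w (hWδ hw))
  set d : Fin D → ℝ := θw - θ1 with hd
  set s := vnorm2 d with hs
  have hs0 : 0 ≤ s := vnorm2_nonneg d
  by_cases hcase : θw = θ1
  · have hG1w : Gfun g θ1 w = 0 := by rw [← hcase]; exact hrootw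
    have hGlin : Gfun g θ1 (w - 1) = 0 := by
      rw [Gfun_sub_w, hG1w, hroot, sub_zero]
    have hT : thetaIJ g hm θ1 w - θw = 0 := by
      rw [thetaIJ, hGlin, Matrix.mulVec_zero, sub_zero, hcase, sub_self]
    rw [hT]
    have hz : vnorm2 (0 : Fin D → ℝ) = 0 := by simp [vnorm2]
    rw [hz]
    rcases le_or_gt 0 (1 + (D:ℝ) * Cw * Lh * Cop) with hK | hK
    · positivity
    · exfalso
      have h2 : 2 * (1 + (D:ℝ) * Cw * Lh * Cop) * Cop < 0 := by nlinarith
      have h3 : δ ≤ 1 / (2 * (1 + (D:ℝ) * Cw * Lh * Cop) * Cop) :=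
        hδΔ.trans (min_le_right _ _)
      nlinarith [one_div_neg.mpr h2]
  -- now θw ≠ θ1
  have hdne : d ≠ 0 := sub_ne_zero.mpr hcase
  have hspos : 0 < s := vnorm2_pos hdne
  rcases lt_or_ge Lh 0 with hLh | hLh
  · -- Lh < 0: contradiction via A4
    exfalso
    set t0 := min 1 (Δθ / s) with ht0
    have ht0pos : 0 < t0 := lt_min one_pos (div_pos hΔθ hspos)
    have ht0le : t0 ≤ 1 := min_le_left _ _
    have ht0mem : t0 ∈ Icc (0:ℝ) 1 := ⟨ht0pos.le, ht0le⟩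
    have hmem := gamma_mem hΩconv hθ1 hθw ht0mem
    have hvn : vnorm2 (θ1 + t0 • d - θ1) = t0 * s := by
      have : θ1 + t0 • d - θ1 = t0 • d := by abel
      rw [this, vnorm2_smul, abs_of_pos ht0pos, hs]
    have hball : vnorm2 (θ1 + t0 • d - θ1) ≤ Δθ := by
      rw [hvn]
      have : t0 ≤ Δθ / s := min_le_right _ _
      calc t0 * s ≤ (Δθ / s) * s := mul_le_mul_of_nonneg_right this hs0
        _ = Δθ := by field_simp
    have h := hA4 _ hmem hball
    rw [hvn] at h
    have hnn : 0 ≤ vnorm2 (fun p : Fin N × Fin D × Fin D =>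
        hm p.1 (θ1 + t0 • d) p.2.1 p.2.2 - hm p.1 θ1 p.2.1 p.2.2) / Real.sqrt N :=
      div_nonneg (vnorm2_nonneg _) hsN.le
    nlinarith [mul_pos ht0pos hspos]
  -- main case : Lh ≥ 0
  have hk : 0 ≤ Cw * Lh := mul_nonneg hCw hLh
  -- Condition 1 at θw : ‖G(θw,1)‖₂ ≤ δ
  have hGw1 : vnorm2 (Gfun g θw 1) ≤ δ := by
    have h := hC1g w hw θw hθw
    rw [hrootw] at h
    have he : vnorm1 ((0 : Fin D → ℝ) - Gfun g θw 1) = vnorm1 (Gfun g θw 1) := by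
      rw [vnorm1, vnorm1]
      apply Finset.sum_congr rfl
      intro i _
      rw [Pi.sub_apply, Pi.zero_apply, zero_sub, abs_neg]
    rw [he] at h
    exact le_trans (vnorm2_le_vnorm1 _) h
  -- step: s ≤ Cop * δ
  have hIc : ∀ (u : Fin N → ℝ) (i : Fin D),
      ContinuousOn (fun t : ℝ => ((Hfun hm (θ1 + t • d) u).mulVec d) i) (Icc (0:ℝ) 1) :=
    fun u i => phi_contOn hΩconv hcont hθ1 hθw u i
  have hFTC : ∀ (u : Fin N → ℝ) (i : Fin D),
      ∫ t in (0:ℝ)..1, ((Hfun hm (θ1 + t • d) u).mulVec d) i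
        = Gfun g θw u i - Gfun g θ1 u i :=
    fun u i => ftc_key hΩconv hderiv hcont hθ1 hθw u i
  have hsb : s ≤ Cop * δ := by
    have hdotc : ContinuousOn
        (fun t : ℝ => ∑ i, d i * ((Hfun hm (θ1 + t • d) 1).mulVec d) i) (Icc (0:ℝ) 1) :=
      continuousOn_finset_sum Finset.univ fun i _ => continuousOn_const.mul (hIc 1 i)
    have hint : IntervalIntegrable
        (fun t : ℝ => ∑ i, d i * ((Hfun hm (θ1 + t • d) 1).mulVec d) i)
        MeasureTheory.volume 0 1 :=
      hdotc.intervalIntegrable_of_Icc zero_le_one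
    have hlow : ∀ t ∈ Icc (0:ℝ) 1,
        s^2 ≤ Cop * ∑ i, d i * ((Hfun hm (θ1 + t • d) 1).mulVec d) i := by
      intro t ht
      have hmem := gamma_mem hΩconv hθ1 hθw ht
      have hq := quad_lower _ (hpos _ hmem) (hA2 _ hmem).2 d
      rw [hs, vnorm2_sq]
      exact hq
    have hmono := intervalIntegral.integral_mono_on zero_le_one
      intervalIntegrable_const (hint.const_mul Cop) hlow
    have hL : ∫ _t in (0:ℝ)..1, s^2 = s^2 := by simp
    have hR : ∫ t in (0:ℝ)..1,
        Cop * ∑ i, d i * ((Hfun hm (θ1 + t • d) 1).mulVec d) i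
        = Cop * ∑ i, d i * Gfun g θw 1 i := by
      rw [intervalIntegral.integral_const_mul]
      congr 1
      rw [intervalIntegral.integral_finset_sum (fun i _ =>
        (continuousOn_const.fun_mul (hIc 1 i)).intervalIntegrable_of_Icc zero_le_one)]
      apply Finset.sum_congr rfl
      intro i _
      rw [intervalIntegral.integral_const_mul, hFTC 1 i, hroot]
      simp
    rw [hL, hR] at hmono
    have hdot : ∑ i, d i * Gfun g θw 1 i ≤ s * δ := by
      calc ∑ i, d i * Gfun g θw 1 i ≤ vnorm2 d * vnorm2 (Gfun g θw 1) := dot_le_vnorm2 _ _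
        _ ≤ s * δ := by
            rw [← hs]
            exact mul_le_mul_of_nonneg_left hGw1 hs0
    have : s^2 ≤ Cop * (s * δ) := hmono.trans (mul_le_mul_of_nonneg_left hdot hCop.le)
    nlinarith
  have hsΔ : s ≤ Δθ := by
    have h1 : δ ≤ Δθ / Cop := hδΔ.trans (min_le_left _ _)
    have h2 : δ * Cop ≤ Δθ := (le_div_iff₀ hCop).mp h1
    nlinarith
  -- the vector v
  set v : Fin D → ℝ :=
    fun i => ∫ t in (0:ℝ)..1, ((Hfun hm (θ1 + t • d) w - Hfun hm θ1 1).mulVec d) i with hv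
  have hψeq : ∀ i : Fin D, (fun t : ℝ => ((Hfun hm (θ1 + t • d) w - Hfun hm θ1 1).mulVec d) i)
      = fun t : ℝ => ((Hfun hm (θ1 + t • d) w).mulVec d) i - ((Hfun hm θ1 1).mulVec d) i := by
    intro i
    funext t
    rw [Matrix.sub_mulVec]
    rfl
  have hψc : ∀ i : Fin D, ContinuousOn
      (fun t : ℝ => ((Hfun hm (θ1 + t • d) w - Hfun hm θ1 1).mulVec d) i) (Icc (0:ℝ) 1) := by
    intro i
    rw [hψeq i]
    exact (hIc w i).sub continuousOn_const
  have hveq : v = ((0 : Fin D → ℝ) - Gfun g θ1 w) - (Hfun hm θ1 1).mulVec d := by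
    funext i
    rw [hv]
    show (∫ t in (0:ℝ)..1, ((Hfun hm (θ1 + t • d) w - Hfun hm θ1 1).mulVec d) i) = _
    rw [hψeq i, intervalIntegral.integral_sub
      ((hIc w i).intervalIntegrable_of_Icc zero_le_one) intervalIntegrable_const,
      hFTC w i, hrootw]
    simp
  -- bound on ‖ψ t‖
  have hψb : ∀ t ∈ Icc (0:ℝ) 1,
      vnorm2 ((Hfun hm (θ1 + t • d) w - Hfun hm θ1 1).mulVec d)
        ≤ (δ + Cw * Lh * s) * s := by
    intro t ht
    have hmem := gamma_mem hΩconv hθ1 hθw ht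
    have hvn : vnorm2 (θ1 + t • d - θ1) = t * s := by
      have he : θ1 + t • d - θ1 = t • d := by abel
      rw [he, vnorm2_smul, abs_of_nonneg ht.1, hs]
    have hball : vnorm2 (θ1 + t • d - θ1) ≤ Δθ := by
      rw [hvn]
      calc t * s ≤ 1 * s := mul_le_mul_of_nonneg_right ht.2 hs0
        _ = s := one_mul s
        _ ≤ Δθ := hsΔ
    have hA4' := hA4 _ hmem hball
    rw [hvn] at hA4'
    have hX : vnorm2 (fun p : Fin D × Fin D =>
        Hfun hm (θ1 + t • d) w p.1 p.2 - Hfun hm θ1 w p.1 p.2) ≤ Cw * (Lh * (t * s)) :=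
      frob_smooth hN hm _ _ w (hA5 w (hWδ hw)) hA4'
    have hY : vnorm2 (fun p : Fin D × Fin D =>
        Hfun hm θ1 w p.1 p.2 - Hfun hm θ1 1 p.1 p.2) ≤ δ := by
      have h1 := hC1h w hw θ1 hθ1
      have h2 := frob_le_mnorm1 (Hfun hm θ1 w - Hfun hm θ1 1)
      have he : (fun p : Fin D × Fin D => (Hfun hm θ1 w - Hfun hm θ1 1) p.1 p.2)
          = fun p : Fin D × Fin D => Hfun hm θ1 w p.1 p.2 - Hfun hm θ1 1 p.1 p.2 := by
        funext p
        rw [Matrix.sub_apply]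
      rw [he] at h2
      exact h2.trans h1
    have hF : vnorm2 (fun p : Fin D × Fin D =>
        (Hfun hm (θ1 + t • d) w - Hfun hm θ1 1) p.1 p.2) ≤ δ + Cw * Lh * s := by
      have he : (fun p : Fin D × Fin D => (Hfun hm (θ1 + t • d) w - Hfun hm θ1 1) p.1 p.2)
          = fun p : Fin D × Fin D =>
            (Hfun hm (θ1 + t • d) w p.1 p.2 - Hfun hm θ1 w p.1 p.2)
              + (Hfun hm θ1 w p.1 p.2 - Hfun hm θ1 1 p.1 p.2) := by
        funext p
        rw [Matrix.sub_apply]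
        ring
      rw [he]
      have := vnorm2_add_le
        (fun p : Fin D × Fin D => Hfun hm (θ1 + t • d) w p.1 p.2 - Hfun hm θ1 w p.1 p.2)
        (fun p : Fin D × Fin D => Hfun hm θ1 w p.1 p.2 - Hfun hm θ1 1 p.1 p.2)
      have hXle : Cw * (Lh * (t * s)) ≤ Cw * Lh * s := by
        have h9 := mul_nonneg (mul_nonneg hk hs0) (sub_nonneg.mpr ht.2)
        nlinarith [h9]
      linarith
    calc vnorm2 ((Hfun hm (θ1 + t • d) w - Hfun hm θ1 1).mulVec d)
        ≤ vnorm2 (fun p : Fin D × Fin D =>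
            (Hfun hm (θ1 + t • d) w - Hfun hm θ1 1) p.1 p.2) * vnorm2 d :=
          mulVec_frob _ _
      _ ≤ (δ + Cw * Lh * s) * s := by
          rw [← hs]
          apply mul_le_mul_of_nonneg_right hF hs0
  have hC0 : 0 ≤ (δ + Cw * Lh * s) * s := by positivity
  -- bound on ‖v‖
  have hvb : vnorm2 v ≤ (δ + Cw * Lh * s) * s := by
    have hvsq : vnorm2 v ^ 2 = ∑ i, v i * v i := by
      rw [vnorm2_sq]
      apply Finset.sum_congr rfl
      intro i _
      ring
    have hswap : ∑ i, v i * v i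
        = ∫ t in (0:ℝ)..1, ∑ i, v i * ((Hfun hm (θ1 + t • d) w - Hfun hm θ1 1).mulVec d) i := by
      rw [intervalIntegral.integral_finset_sum (fun i _ =>
        ((continuousOn_const.fun_mul (hψc i)).intervalIntegrable_of_Icc zero_le_one))]
      apply Finset.sum_congr rfl
      intro i _
      rw [intervalIntegral.integral_const_mul]
    have hintc : ContinuousOn (fun t : ℝ =>
        ∑ i, v i * ((Hfun hm (θ1 + t • d) w - Hfun hm θ1 1).mulVec d) i) (Icc (0:ℝ) 1) :=
      continuousOn_finset_sum Finset.univ fun i _ => continuousOn_const.mul (hψc i)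
    have hup : ∀ t ∈ Icc (0:ℝ) 1,
        ∑ i, v i * ((Hfun hm (θ1 + t • d) w - Hfun hm θ1 1).mulVec d) i
          ≤ vnorm2 v * ((δ + Cw * Lh * s) * s) := by
      intro t ht
      calc ∑ i, v i * ((Hfun hm (θ1 + t • d) w - Hfun hm θ1 1).mulVec d) i
          ≤ vnorm2 v * vnorm2 ((Hfun hm (θ1 + t • d) w - Hfun hm θ1 1).mulVec d) :=
            dot_le_vnorm2 _ _
        _ ≤ vnorm2 v * ((δ + Cw * Lh * s) * s) :=
            mul_le_mul_of_nonneg_left (hψb t ht) (vnorm2_nonneg v)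
    have hmono := intervalIntegral.integral_mono_on zero_le_one
      (hintc.intervalIntegrable_of_Icc zero_le_one)
      (intervalIntegrable_const (μ := MeasureTheory.volume) (c := vnorm2 v * ((δ + Cw * Lh * s) * s))) hup
    have hRc : ∫ _t in (0:ℝ)..1, vnorm2 v * ((δ + Cw * Lh * s) * s)
        = vnorm2 v * ((δ + Cw * Lh * s) * s) := by simp
    rw [hRc] at hmono
    rw [← hswap] at hmono
    rw [← hvsq] at hmono
    nlinarith [vnorm2_nonneg v]
  -- identity for the error
  have hlinw : Gfun g θ1 (w - 1) = Gfun g θ1 w := by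
    rw [Gfun_sub_w, hroot, sub_zero]
  have hT : thetaIJ g hm θ1 w - θw = (Hfun hm θ1 1)⁻¹.mulVec v := by
    rw [hveq, thetaIJ, hlinw]
    rw [Matrix.mulVec_sub, Matrix.mulVec_sub, Matrix.mulVec_mulVec,
      Matrix.nonsing_inv_mul _ hdet1, Matrix.one_mulVec, Matrix.mulVec_zero]
    rw [hd]
    abel
  rw [hT]
  have hfin : vnorm2 ((Hfun hm θ1 1)⁻¹.mulVec v) ≤ Cop * ((δ + Cw * Lh * s) * s) := by
    calc vnorm2 ((Hfun hm θ1 1)⁻¹.mulVec v)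
        ≤ opNorm (Hfun hm θ1 1)⁻¹ * vnorm2 v := mulVec_opNorm _ _
      _ ≤ Cop * vnorm2 v := mul_le_mul_of_nonneg_right hCop2 (vnorm2_nonneg v)
      _ ≤ Cop * ((δ + Cw * Lh * s) * s) := mul_le_mul_of_nonneg_left hvb hCop.le
  have hD1 : (1:ℝ) ≤ (D:ℝ) := by exact_mod_cast hD
  have hnum : Cop * ((δ + Cw * Lh * s) * s)
      ≤ 2 * Cop ^ 2 * (1 + (D:ℝ) * Cw * Lh * Cop) * δ ^ 2 := by
    have hstep : (δ + Cw * Lh * s) * s ≤ (δ + Cw * Lh * (Cop * δ)) * (Cop * δ) := by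
      have h1 : δ + Cw * Lh * s ≤ δ + Cw * Lh * (Cop * δ) := by
        have := mul_le_mul_of_nonneg_left hsb hk
        linarith
      exact mul_le_mul h1 hsb hs0
        (add_nonneg hδ (mul_nonneg hk (mul_nonneg hCop.le hδ)))
    have h3 : Cop * ((δ + Cw * Lh * s) * s) ≤ Cop * ((δ + Cw * Lh * (Cop * δ)) * (Cop * δ)) :=
      mul_le_mul_of_nonneg_left hstep hCop.le
    have h4 : Cop * ((δ + Cw * Lh * (Cop * δ)) * (Cop * δ))
        = Cop^2 * δ^2 * (1 + Cw * Lh * Cop) := by ring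
    have hkc : 0 ≤ Cw * Lh * Cop := mul_nonneg hk hCop.le
    have hXnn : 0 ≤ Cop^2 * δ^2 := by positivity
    have h5 : Cop^2 * δ^2 * (1 + Cw * Lh * Cop)
        ≤ 2 * Cop ^ 2 * (1 + (D:ℝ) * Cw * Lh * Cop) * δ ^ 2 := by
      nlinarith [mul_nonneg (mul_nonneg (sub_nonneg.mpr hD1) hkc) hXnn,
        mul_nonneg hkc hXnn, hXnn]
    linarith
  exact hfin.trans hnum
end

section
/- Let g_n : ℝ^D → ℝ^D (n = 1,…,N) be continuously differentiable, define G(θ,w) := (1/N)·Σ_{n=1}^N w_n g_n(θ) and H(θ,w) := (1/N)·Σ_{n=1}^N w_n h_n(θ) with h_n the Jacobian of g_n. Let U ⊆ ℝ^N be an open set, w ∈ U, and let θ̂ : U → ℝ^D be differentiable at w with G(θ̂(w'), w') = 0 for all w' ∈ U. If H(θ̂(w), w) is invertible, then for every direction a ∈ ℝ^N the derivative of θ̂ at w satisfies Dθ̂(w)[a] = −H(θ̂(w), w)⁻¹ · G(θ̂(w), a); in particular, (dθ̂/dwᵀ)|_w · a = −H(θ̂(w),w)⁻¹ · (1/N)·Σ_{n=1}^N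 a_n g_n(θ̂(w)). -/
/- Derivative of the weighted M-estimator with respect to the weights
   (Proposition 4): Dθ̂(w)[a] = −H(θ̂(w),w)⁻¹ G(θ̂(w), a). -/

open scoped BigOperators

private lemma sum_mulVec' {D N : ℕ} (A : Fin N → Matrix (Fin D) (Fin D) ℝ) (v : Fin D → ℝ) :
    (∑ n, A n).mulVec v = ∑ n, (A n).mulVec v := by
  ext i
  simp [Matrix.mulVec, dotProduct, Finset.sum_apply, Matrix.sum_apply, Finset.sum_mul]
  rw [Finset.sum_comm]

theorem weight_derivative_of_estimator
    (N D : ℕ) (hN : 0 < N) (hD : 0 < D)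
    -- the gₙ are continuously differentiable with Jacobians hₙ
    (g : Fin N → (Fin D → ℝ) → Fin D → ℝ)
    (hm : Fin N → (Fin D → ℝ) → Matrix (Fin D) (Fin D) ℝ)
    (hderiv : ∀ n, ∀ θ : Fin D → ℝ,
      HasFDerivAt (g n) ((hm n θ).mulVecLin.toContinuousLinearMap) θ)
    (hcont : ∀ n, ∀ i j : Fin D, Continuous (fun θ => hm n θ i j))
    -- U is open, w ∈ U, and θ̂ is differentiable at w with derivative Dθ̂(w)
    (U : Set (Fin N → ℝ)) (hU : IsOpen U) (w : Fin N → ℝ) (hw : w ∈ U)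
    (θhat : (Fin N → ℝ) → Fin D → ℝ)
    (Dθhat : (Fin N → ℝ) →L[ℝ] (Fin D → ℝ))
    (hdiff : HasFDerivAt θhat Dθhat w)
    -- θ̂ satisfies the estimating equation on U
    (hroot : ∀ w' ∈ U, Gfun g (θhat w') w' = 0)
    -- H(θ̂(w), w) is invertible
    (hinv : IsUnit (Hfun hm (θhat w) w)) :
    ∀ a : Fin N → ℝ,
      Dθhat a = -(Hfun hm (θhat w) w)⁻¹.mulVec (Gfun g (θhat w) a) := by
  intro a
  set θ0 := θhat w with hθ0
  -- derivative of each summand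
  have h1 : ∀ n : Fin N, HasFDerivAt (fun w' => w' n • g n (θhat w'))
      (w n • (((hm n θ0).mulVecLin.toContinuousLinearMap).comp Dθhat)
        + (ContinuousLinearMap.proj n : (Fin N → ℝ) →L[ℝ] ℝ).smulRight (g n θ0)) w := by
    intro n
    have hs : HasFDerivAt (fun w' : Fin N → ℝ => w' n)
        (ContinuousLinearMap.proj n : (Fin N → ℝ) →L[ℝ] ℝ) w :=
      by exact (ContinuousLinearMap.proj n : (Fin N → ℝ) →L[ℝ] ℝ).hasFDerivAt
    have hv : HasFDerivAt (fun w' => g n (θhat w'))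
        (((hm n θ0).mulVecLin.toContinuousLinearMap).comp Dθhat) w :=
      (hderiv n θ0).comp w hdiff
    simpa using hs.smul hv
  have key : HasFDerivAt (fun w' => Gfun g (θhat w') w')
      ((N:ℝ)⁻¹ • ∑ n, (w n • (((hm n θ0).mulVecLin.toContinuousLinearMap).comp Dθhat)
        + (ContinuousLinearMap.proj n : (Fin N → ℝ) →L[ℝ] ℝ).smulRight (g n θ0))) w := by
    have hsum := HasFDerivAt.sum (fun n (_ : n ∈ Finset.univ) => h1 n)
    have := hsum.const_smul ((N:ℝ)⁻¹)
    simpa [Gfun] using this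
  have hzero : HasFDerivAt (fun w' => Gfun g (θhat w') w')
      (0 : (Fin N → ℝ) →L[ℝ] (Fin D → ℝ)) w := by
    have hev : (fun w' => Gfun g (θhat w') w') =ᶠ[nhds w] fun _ => (0 : Fin D → ℝ) := by
      filter_upwards [hU.mem_nhds hw] with w' hw' using hroot w' hw'
    exact (hasFDerivAt_const (0 : Fin D → ℝ) w).congr_of_eventuallyEq hev
  have heq := key.unique hzero
  have h0 : (N:ℝ)⁻¹ • ∑ n, (w n • (hm n θ0).mulVec (Dθhat a) + a n • g n θ0)
      = (0 : Fin D → ℝ) := by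
    have := congrArg (fun L : (Fin N → ℝ) →L[ℝ] (Fin D → ℝ) => L a) heq
    simpa [ContinuousLinearMap.sum_apply, Matrix.mulVecLin] using this
  have hsum : (Hfun hm θ0 w).mulVec (Dθhat a) + Gfun g θ0 a = 0 := by
    have lhs : (Hfun hm θ0 w).mulVec (Dθhat a) + Gfun g θ0 a
        = (N:ℝ)⁻¹ • ∑ n, (w n • (hm n θ0).mulVec (Dθhat a) + a n • g n θ0) := by
      simp only [Hfun, Gfun, Matrix.smul_mulVec, sum_mulVec',
        Finset.sum_add_distrib, smul_add]
    rw [lhs, h0]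
  have hdet : IsUnit (Hfun hm θ0 w).det := (Matrix.isUnit_iff_isUnit_det _).mp hinv
  have hH : (Hfun hm θ0 w).mulVec (Dθhat a) = -(Gfun g θ0 a) := by
    have := hsum
    linear_combination (norm := module) this
  calc Dθhat a = ((Hfun hm θ0 w)⁻¹ * Hfun hm θ0 w).mulVec (Dθhat a) := by
        rw [Matrix.nonsing_inv_mul _ hdet, Matrix.one_mulVec]
    _ = (Hfun hm θ0 w)⁻¹.mulVec ((Hfun hm θ0 w).mulVec (Dθhat a)) := by
        rw [Matrix.mulVec_mulVec]
    _ = -(Hfun hm θ0 w)⁻¹.mulVec (Gfun g θ0 a) := by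
        rw [hH, Matrix.mulVec_neg]
end
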